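/- Let p ≥ 1, let F be a probability measure on [0,∞)^p admitting a density f with respect to Lebesgue measure, let γ₁,…,γ_p ≥ 0, let ρ₀ be a Lévy measure on (0,∞), and let ρ be the compound Lévy measure built from (F, ρ₀, γ). Then for every Borel set A ⊆ [0,∞)^p with 0 ∉ A, ρ(A) = ∫_A e^{-Σ_{k=1}^p γ_k w_k} [∫₀^∞ w₀^{-p} f(w₁/w₀, …, w_p/w₀) ρ₀(dw₀)] dw₁ ⋯ dw_p; that is, on [0,∞)^p ∖ {0} the measure ρ is absolutely continuous with the stated density. -/

import Mathlib

open MeasureTheory Filter Set Real Topology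

/-- The compound Lévy measure on `[0,∞)^p` built from a score distribution `F` on `[0,∞)^p`,
a base Lévy measure `ρ₀` on `(0,∞)` and exponential tilting parameters `γ₁,…,γ_p ≥ 0`: the
pushforward of `e^{-w₀ Σ_k γ_k β_k} F(dβ) ρ₀(dw₀)` on `(0,∞) × [0,∞)^p` under the map
`(w₀, β) ↦ (w₀ β₁, …, w₀ β_p)`. -/
noncomputable def compoundLevy {p : ℕ} (F : Measure (Fin p → ℝ)) (ρ₀ : Measure ℝ)
    (γ : Fin p → ℝ) : Measure (Fin p → ℝ) :=
  Measure.map (fun q : ℝ × (Fin p → ℝ) => fun k => q.1 * q.2 k)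
    (((ρ₀.restrict (Set.Ioi 0)).prod F).withDensity
      fun q => ENNReal.ofReal (Real.exp (-q.1 * ∑ k, γ k * q.2 k)))

/-- If the score distribution `F` has a density `f` (supported on the
nonnegative orthant) with respect to Lebesgue measure, then away from the origin the compound
Lévy measure is absolutely continuous with density
`w ↦ e^{-Σ_k γ_k w_k} ∫₀^∞ w₀^(-p) f(w₁/w₀, …, w_p/w₀) ρ₀(dw₀)`: for every Borel set `A`
with `0 ∉ A`, `ρ(A) = ∫_A e^{-Σ_k γ_k w_k} [∫₀^∞ w₀^(-p) f(w/w₀) ρ₀(dw₀)] dw`. -/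
theorem compound_levy_density (p : ℕ) (hp : 1 ≤ p)
    (f : (Fin p → ℝ) → ℝ) (hfmeas : Measurable f) (hfnn : ∀ β, 0 ≤ f β)
    (hfsupp : ∀ β, (∃ k, β k < 0) → f β = 0)
    (F : Measure (Fin p → ℝ)) [IsProbabilityMeasure F]
    (hF : F = volume.withDensity fun β => ENNReal.ofReal (f β))
    (γ : Fin p → ℝ) (hγ : ∀ k, 0 ≤ γ k)
    (ρ₀ : Measure ℝ) (hρ₀supp : ρ₀ (Set.Iic 0) = 0)
    (hρ₀levy : ∫⁻ w in Set.Ioi (0 : ℝ), ENNReal.ofReal (min 1 w) ∂ρ₀ < ⊤)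
    (A : Set (Fin p → ℝ)) (hA : MeasurableSet A) (hA0 : (0 : Fin p → ℝ) ∉ A) :
    compoundLevy F ρ₀ γ A =
      ∫⁻ w in A, ENNReal.ofReal (Real.exp (-∑ k, γ k * w k)) *
        ∫⁻ w₀ in Set.Ioi (0 : ℝ),
          ENNReal.ofReal (w₀ ^ (-(p : ℝ)) * f (fun k => w k / w₀)) ∂ρ₀ := by
  classical
  -- sigma-finiteness of ρ₀ restricted to Ioi 0
  have hfin : ∀ n : ℕ, ρ₀ (Set.Ioi (((n : ℝ)+1)⁻¹)) < ⊤ := by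
    intro n
    set c : ℝ := ((n : ℝ)+1)⁻¹ with hc
    have hc0 : 0 < c := by positivity
    have h1 : ENNReal.ofReal (min 1 c) * ρ₀ (Set.Ioi c) ≤
        ∫⁻ w in Set.Ioi (0:ℝ), ENNReal.ofReal (min 1 w) ∂ρ₀ := by
      calc ENNReal.ofReal (min 1 c) * ρ₀ (Set.Ioi c)
          = ∫⁻ _ in Set.Ioi c, ENNReal.ofReal (min 1 c) ∂ρ₀ := by
            rw [setLIntegral_const, mul_comm]
        _ ≤ ∫⁻ w in Set.Ioi c, ENNReal.ofReal (min 1 w) ∂ρ₀ := by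
            refine setLIntegral_mono (by fun_prop) fun w hw => ?_
            exact ENNReal.ofReal_le_ofReal (min_le_min le_rfl (le_of_lt hw))
        _ ≤ ∫⁻ w in Set.Ioi (0:ℝ), ENNReal.ofReal (min 1 w) ∂ρ₀ :=
            lintegral_mono_set (Set.Ioi_subset_Ioi hc0.le)
    have h2 := h1.trans_lt hρ₀levy
    rcases ENNReal.mul_lt_top_iff.mp h2 with ⟨_, h⟩ | h | h
    · exact h
    · exfalso
      have : (0:ℝ) < min 1 c := lt_min one_pos hc0
      simp [ENNReal.ofReal_eq_zero, not_le.mpr this] at h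
      linarith
    · simp [h]
  have hsf : SigmaFinite (ρ₀.restrict (Set.Ioi 0)) := by
    refine ⟨⟨⟨fun n => Set.Iic 0 ∪ Set.Ioi (((n : ℝ)+1)⁻¹), fun _ => trivial, ?_, ?_⟩⟩⟩
    · intro n
      rw [Measure.restrict_apply (measurableSet_Iic.union measurableSet_Ioi)]
      refine lt_of_le_of_lt (measure_mono ?_) (hfin n)
      rintro x ⟨hx | hx, hx0⟩
      · exact absurd (Set.mem_Iic.mp hx) (not_le.mpr hx0)
      · exact hx
    · ext x
      simp only [Set.mem_iUnion, Set.mem_union, Set.mem_Iic, Set.mem_Ioi, Set.mem_univ, iff_true]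
      rcases le_or_gt x 0 with hx | hx
      · exact ⟨0, Or.inl hx⟩
      · obtain ⟨n, hn⟩ := exists_nat_one_div_lt hx
        exact ⟨n, Or.inr (by rwa [one_div] at hn)⟩
  -- notation
  set μ₀ : Measure ℝ := ρ₀.restrict (Set.Ioi 0) with hμ₀
  set φ : ℝ × (Fin p → ℝ) → (Fin p → ℝ) := fun q => fun k => q.1 * q.2 k with hφdef
  have hφmeas : Measurable φ :=
    measurable_pi_lambda _ fun k =>
      measurable_fst.mul ((measurable_pi_apply k).comp measurable_snd)
  set g : ℝ × (Fin p → ℝ) → ENNReal :=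
    fun q => ENNReal.ofReal (Real.exp (-q.1 * ∑ k, γ k * q.2 k)) with hgdef
  have hgmeas : Measurable g := by
    apply Measurable.ennreal_ofReal
    apply Measurable.exp
    exact (measurable_fst.neg.mul
      (Finset.measurable_sum _ fun k _ =>
        measurable_const.mul ((measurable_pi_apply k).comp measurable_snd)))
  set I : ℝ × (Fin p → ℝ) → ENNReal := (φ ⁻¹' A).indicator g with hIdef
  have hImeas : Measurable I := hgmeas.indicator (hφmeas hA)
  -- the density-form integrand after change of variables
  set e : (Fin p → ℝ) → ENNReal :=
    fun w => ENNReal.ofReal (Real.exp (-∑ k, γ k * w k)) with hedef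
  have hemeas : Measurable e := by
    apply Measurable.ennreal_ofReal
    apply Measurable.exp
    exact (Finset.measurable_sum _ fun k _ =>
      measurable_const.mul (measurable_pi_apply k)).neg
  set J : ℝ → (Fin p → ℝ) → ENNReal := fun w₀ w =>
    A.indicator (fun _ => (1:ENNReal)) w * e w *
      ENNReal.ofReal (((w₀ ^ p)⁻¹) * f (fun k => w k / w₀)) with hJdef
  have hJmeas : Measurable (Function.uncurry J) := by
    apply Measurable.mul
    · apply Measurable.mul
      · exact ((measurable_const.indicator hA).comp measurable_snd)
      · exact hemeas.comp measurable_snd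
    · apply Measurable.ennreal_ofReal
      exact ((measurable_fst.pow_const p).inv).mul
        (hfmeas.comp (measurable_pi_lambda _ fun k =>
          ((measurable_pi_apply k).comp measurable_snd).div measurable_fst))
  -- step A: unfold the pushforward
  have stepA : compoundLevy F ρ₀ γ A = ∫⁻ w₀, ∫⁻ β, I (w₀, β) ∂F ∂μ₀ := by
    rw [compoundLevy, Measure.map_apply hφmeas hA, withDensity_apply _ (hφmeas hA),
      ← lintegral_indicator (hφmeas hA)]
    exact lintegral_prod _ hImeas.aemeasurable
  -- step B+C: for w₀ > 0, rewrite the inner integral by change of variables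
  have stepBC : ∀ w₀ : ℝ, 0 < w₀ → (∫⁻ β, I (w₀, β) ∂F) = ∫⁻ w, J w₀ w ∂volume := by
    intro w₀ hw₀
    set K : (Fin p → ℝ) → ENNReal := fun w =>
      A.indicator (fun _ => (1:ENNReal)) w * e w *
        ENNReal.ofReal (f (fun k => w k / w₀)) with hKdef
    have hKmeas : Measurable K := by
      apply Measurable.mul
      · exact (measurable_const.indicator hA).mul hemeas
      · exact Measurable.ennreal_ofReal (hfmeas.comp
          (measurable_pi_lambda _ fun k => by fun_prop))
    have hpt : ∀ β, ENNReal.ofReal (f β) * I (w₀, β) = K (w₀ • β) := by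
      intro β
      have hsb : w₀ • β = fun k => w₀ * β k := rfl
      have hdiv : (fun k => (w₀ • β) k / w₀) = β := by
        funext k
        simp only [Pi.smul_apply, smul_eq_mul]
        exact mul_div_cancel_left₀ _ (ne_of_gt hw₀)
      have hexp : (∑ k, γ k * (w₀ • β) k) = w₀ * ∑ k, γ k * β k := by
        rw [Finset.mul_sum]
        exact Finset.sum_congr rfl fun k _ => by simp [Pi.smul_apply, smul_eq_mul]; ring
      simp only [hKdef, hIdef, Set.indicator_apply, Set.mem_preimage, hφdef, hgdef, hedef,
        ← hsb, hdiv, hexp]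
      by_cases hm : w₀ • β ∈ A
      · simp only [hm, if_pos, one_mul]
        rw [mul_comm, neg_mul]
      · simp [hm]
    have hchg : (∫⁻ β, K (w₀ • β) ∂volume) =
        ENNReal.ofReal ((w₀ ^ p)⁻¹) * ∫⁻ w, K w ∂volume := by
      have hmap := Measure.map_addHaar_smul (volume : Measure (Fin p → ℝ)) (ne_of_gt hw₀)
      have := lintegral_map (μ := (volume : Measure (Fin p → ℝ))) hKmeas (measurable_const_smul (M := ℝ) w₀)
      rw [hmap] at this
      rw [← this, lintegral_smul_measure]
      congr 1
      rw [Module.finrank_fintype_fun_eq_card, Fintype.card_fin,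
        abs_of_pos (by positivity)]
    calc (∫⁻ β, I (w₀, β) ∂F)
        = ∫⁻ β, ENNReal.ofReal (f β) * I (w₀, β) ∂volume := by
          rw [hF]
          exact lintegral_withDensity_eq_lintegral_mul _ hfmeas.ennreal_ofReal
            (show Measurable fun β => I (w₀, β) from hImeas.comp measurable_prodMk_left)
      _ = ∫⁻ β, K (w₀ • β) ∂volume := lintegral_congr hpt
      _ = ENNReal.ofReal ((w₀ ^ p)⁻¹) * ∫⁻ w, K w ∂volume := hchg
      _ = ∫⁻ w, ENNReal.ofReal ((w₀ ^ p)⁻¹) * K w ∂volume :=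
          (lintegral_const_mul _ hKmeas).symm
      _ = ∫⁻ w, J w₀ w ∂volume := by
          refine lintegral_congr fun w => ?_
          simp only [hKdef, hJdef]
          rw [ENNReal.ofReal_mul (by positivity)]
          ring
  -- assemble
  rw [stepA]
  rw [setLIntegral_congr_fun measurableSet_Ioi
    (fun w₀ hw₀ => stepBC w₀ hw₀)]
  rw [lintegral_lintegral_swap hJmeas.aemeasurable]
  -- step E: compute the inner integral and repackage
  have inner_eq : ∀ w : Fin p → ℝ,
      (∫⁻ w₀, J w₀ w ∂μ₀) =
        A.indicator (fun w => e w * ∫⁻ w₀ in Set.Ioi (0:ℝ),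
          ENNReal.ofReal (w₀ ^ (-(p : ℝ)) * f (fun k => w k / w₀)) ∂ρ₀) w := by
    intro w
    have hrw : (∫⁻ w₀ in Set.Ioi (0:ℝ),
        ENNReal.ofReal (w₀ ^ (-(p : ℝ)) * f (fun k => w k / w₀)) ∂ρ₀) =
        ∫⁻ w₀ in Set.Ioi (0:ℝ),
        ENNReal.ofReal (((w₀ ^ p)⁻¹) * f (fun k => w k / w₀)) ∂ρ₀ := by
      refine setLIntegral_congr_fun measurableSet_Ioi
        (fun w₀ hw₀ => ?_)
      congr 2
      rw [Real.rpow_neg (le_of_lt hw₀), Real.rpow_natCast]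
    by_cases hm : w ∈ A
    · rw [Set.indicator_of_mem hm, hrw]
      have hmeas' : Measurable fun w₀ : ℝ =>
          ENNReal.ofReal ((w₀ ^ p)⁻¹ * f fun k => w k / w₀) :=
        Measurable.ennreal_ofReal (((measurable_id.pow_const p).inv).mul (hfmeas.comp
          (measurable_pi_lambda _ fun k => measurable_const.div measurable_id)))
      rw [← lintegral_const_mul (e w) hmeas']
      refine lintegral_congr fun w₀ => ?_
      simp [hJdef, Set.indicator_of_mem hm]
    · simp [hJdef, Set.indicator_of_notMem hm]
  rw [lintegral_congr inner_eq, lintegral_indicator hA]
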